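/- For all integers m ≥ 0 and i ≥ 0, the rational function h_m(v) is regular at v = 0 and its i-th Taylor coefficient at v = 0 equals (i!)² times the coefficient of u^m in the polynomial p_i(u). Equivalently, the double series identity ∑_{n≥0} (n!)² p_n(u) v^n = ∑_{m≥0} h_m(v) u^m holds coefficientwise. -/

import Mathlib

open Polynomial

/-- Derivative of a rational function. -/
noncomputable def ratDeriv (f : RatFunc ℚ) : RatFunc ℚ :=
  RatFunc.mk (Polynomial.derivative f.num * f.denom - f.num * Polynomial.derivative f.denom)
    (f.denom ^ 2)

local notation "PS" => PowerSeries ℚ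
local notation "LS" => LaurentSeries ℚ

lemma polyL_injective : Function.Injective (fun P : ℚ[X] => ((P : PS) : LS)) :=
  HahnSeries.ofPowerSeries_injective.comp (Polynomial.coe_injective ℚ)

lemma coe_poly_ratFunc (P : ℚ[X]) :
    ((algebraMap ℚ[X] (RatFunc ℚ) P : RatFunc ℚ) : LS) = ((P : PS) : LS) := by
  rw [RatFunc.coe_coe]; rfl

lemma ratFunc_coe_smul (c : ℚ) (a : RatFunc ℚ) : ((c • a : RatFunc ℚ) : LS) = c • (a:LS) := by
  rw [RatFunc.smul_eq_C_mul, map_mul, ← HahnSeries.C_mul_eq_smul, ← RatFunc.algebraMap_C,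
    coe_poly_ratFunc, Polynomial.coe_C, HahnSeries.ofPowerSeries_C]

lemma ratDeriv_coe (f : RatFunc ℚ) (φ : PS) (hf : (f : LS) = (φ : LS)) :
    (ratDeriv f : LS) = ((PowerSeries.derivative ℚ φ : PS) : LS) := by
  have hD : f.denom ≠ 0 := f.denom_ne_zero
  have hnum : ((f.num : PS) : LS) = (φ : LS) * ((f.denom : PS) : LS) := by
    rw [← coe_poly_ratFunc, ← coe_poly_ratFunc, ← hf, ← map_mul]
    congr 1
    rw [← div_eq_iff (RatFunc.algebraMap_ne_zero hD)]
    exact RatFunc.num_div_denom f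
  have hnum' : (f.num : PS) = φ * (f.denom : PS) := by
    apply HahnSeries.ofPowerSeries_injective (Γ := ℤ) (R := ℚ)
    rw [show (HahnSeries.ofPowerSeries ℤ ℚ) (f.num : PS) = ((f.num : PS) : LS) from rfl, hnum,
      ← map_mul]
  have hmk : ratDeriv f = algebraMap ℚ[X] (RatFunc ℚ)
        (Polynomial.derivative f.num * f.denom - f.num * Polynomial.derivative f.denom)
      / algebraMap ℚ[X] (RatFunc ℚ) (f.denom ^ 2) := RatFunc.mk_eq_div _ _
  rw [hmk, map_div₀, coe_poly_ratFunc, coe_poly_ratFunc]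
  rw [div_eq_iff (by
    intro hx
    exact (pow_ne_zero 2 hD) (polyL_injective (by simpa using hx)))]
  rw [show (((f.denom ^ 2 : ℚ[X]) : PS) : LS) = ((((f.denom : ℚ[X]) : PS) ^ 2 : PS) : LS) by
    push_cast; ring_nf]
  rw [show (((Polynomial.derivative f.num * f.denom
        - f.num * Polynomial.derivative f.denom : ℚ[X]) : PS) : LS)
      = ((((Polynomial.derivative f.num : PS) * (f.denom : PS)
        - (f.num : PS) * (Polynomial.derivative f.denom : PS)) : PS) : LS) by push_cast; ring_nf]
  rw [← map_mul (HahnSeries.ofPowerSeries ℤ ℚ)]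
  apply congrArg
  rw [← PowerSeries.derivative_coe, ← PowerSeries.derivative_coe, hnum', Derivation.leibniz]
  simp only [smul_eq_mul]
  ring

set_option maxHeartbeats 1000000 in
/-- For all `m, i ≥ 0`: the rational function `h m` is regular at `v = 0` (its Laurent
expansion at `0` has no negative-index coefficients) and its `i`-th Taylor coefficient at
`v = 0` equals `(i!)²` times the coefficient of `u^m` in `p i`; i.e. the identity
`∑_{n≥0} (n!)² pₙ(u) vⁿ = ∑_{m≥0} h_m(v) u^m` holds coefficientwise. -/
theorem h_taylor_coeff_eq_p_coeff
    (h : ℕ → RatFunc ℚ)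
    (h0 : h 0 = 1)
    (hrec : ∀ n : ℕ, 1 ≤ n →
      h n / RatFunc.X - (n : ℚ) • h n + ((n : ℚ) - 1) • h (n - 1)
        - RatFunc.X * ratDeriv (h (n - 1))
        + (1/4 : ℚ) •
          (RatFunc.X * ratDeriv (RatFunc.X * ratDeriv (RatFunc.X * h (n - 1)))) = 0)
    (p : ℕ → Polynomial ℚ)
    (hp0 : p 0 = 1)
    (hprec : ∀ n : ℕ,
      (((n : ℚ) + 1) ^ 2) • p (n + 1) + (X ^ 2 - X) * Polynomial.derivative (p n)
        - (n : ℚ) • (X * p n)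
        + (1/4 : ℚ) • (X * (if n = 0 then 0 else p (n - 1))) = 0)
    (m : ℕ) :
    (∀ i : ℤ, i < 0 → ((h m : LaurentSeries ℚ)).coeff i = 0) ∧
    (∀ i : ℕ, ((h m : LaurentSeries ℚ)).coeff (i : ℤ)
        = ((Nat.factorial i : ℚ)) ^ 2 * (p i).coeff m) := by
  -- coefficient facts about p
  have p0 : ∀ i : ℕ, (p (i + 1)).coeff 0 = 0 := by
    intro i
    have H := congrArg (fun q : ℚ[X] => q.coeff 0) (hprec i)
    simp only [Polynomial.coeff_add, Polynomial.coeff_sub, Polynomial.coeff_smul,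
      Polynomial.mul_coeff_zero, Polynomial.coeff_zero, smul_eq_mul, Polynomial.coeff_X_zero,
      Polynomial.coeff_X_pow, mul_zero, zero_mul, sub_zero, add_zero, sub_self] at H
    norm_num at H
    exact H.resolve_left (by positivity)
  have pstep : ∀ i k : ℕ, ((i:ℚ) + 1) ^ 2 * (p (i+1)).coeff (k+1)
      = ((k:ℚ) + 1) * (p i).coeff (k+1) + ((i:ℚ) - k) * (p i).coeff k
        - (1/4) * (if i = 0 then (0:ℚ) else (p (i-1)).coeff k) := by
    intro i k
    have H := congrArg (fun q : ℚ[X] => q.coeff (k+1)) (hprec i)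
    simp only [Polynomial.coeff_add, Polynomial.coeff_sub, Polynomial.coeff_smul,
      Polynomial.coeff_zero, smul_eq_mul, sub_mul, Polynomial.coeff_X_mul] at H
    have h1 : ((X:ℚ[X])^2 * Polynomial.derivative (p i)).coeff (k+1)
        = (k:ℚ) * (p i).coeff k := by
      rw [sq, mul_assoc, Polynomial.coeff_X_mul]
      cases k with
      | zero => simp [Polynomial.mul_coeff_zero]
      | succ l =>
        rw [Polynomial.coeff_X_mul, Polynomial.coeff_derivative]
        push_cast; ring
    rw [h1, Polynomial.coeff_derivative] at H
    rw [apply_ite (fun q : ℚ[X] => q.coeff k)] at H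
    simp only [Polynomial.coeff_zero] at H
    linarith [H]
  -- the main induction
  have main : ∀ M : ℕ, ∃ φ : PS, (h M : LS) = (φ : LS)
      ∧ ∀ i : ℕ, PowerSeries.coeff i φ = (Nat.factorial i : ℚ) ^ 2 * (p i).coeff M := by
    intro M
    induction M with
    | zero =>
      refine ⟨1, by rw [h0, map_one, map_one], ?_⟩
      intro i
      cases i with
      | zero => simp [hp0]
      | succ j => simp [PowerSeries.coeff_one, p0 j]
    | succ k IH =>
      obtain ⟨φ, hφL, hφc⟩ := IH
      have hXh : ((RatFunc.X * h k : RatFunc ℚ) : LS)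
          = ((PowerSeries.X * φ : PS) : LS) := by
        rw [map_mul, RatFunc.coe_X, hφL, map_mul (HahnSeries.ofPowerSeries ℤ ℚ),
          HahnSeries.ofPowerSeries_X]
      have d1 : (ratDeriv (h k) : LS) = ((PowerSeries.derivative ℚ φ : PS) : LS) :=
        ratDeriv_coe _ _ hφL
      have d2 : (ratDeriv (RatFunc.X * h k) : LS)
          = ((PowerSeries.derivative ℚ (PowerSeries.X * φ) : PS) : LS) :=
        ratDeriv_coe _ _ hXh
      have hXd2 : ((RatFunc.X * ratDeriv (RatFunc.X * h k) : RatFunc ℚ) : LS)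
          = ((PowerSeries.X * PowerSeries.derivative ℚ (PowerSeries.X * φ) : PS) : LS) := by
        rw [map_mul, RatFunc.coe_X, d2, map_mul (HahnSeries.ofPowerSeries ℤ ℚ),
          HahnSeries.ofPowerSeries_X]
      have d3 : (ratDeriv (RatFunc.X * ratDeriv (RatFunc.X * h k)) : LS)
          = ((PowerSeries.derivative ℚ
              (PowerSeries.X * PowerSeries.derivative ℚ (PowerSeries.X * φ)) : PS) : LS) :=
        ratDeriv_coe _ _ hXd2
      set ψ : PS := (-(k:ℚ)) • φ + PowerSeries.X * PowerSeries.derivative ℚ φ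
        - (1/4 : ℚ) • (PowerSeries.X * PowerSeries.derivative ℚ
            (PowerSeries.X * PowerSeries.derivative ℚ (PowerSeries.X * φ))) with hψ
      -- the equation satisfied by h (k+1)
      have hrecn := hrec (k+1) (Nat.le_add_left 1 k)
      simp only [Nat.add_sub_cancel] at hrecn
      have heq : h (k+1) = RatFunc.X * (((k:ℚ)+1) • h (k+1) - (k:ℚ) • h k
          + RatFunc.X * ratDeriv (h k)
          - (1/4 : ℚ) • (RatFunc.X * ratDeriv (RatFunc.X * ratDeriv (RatFunc.X * h k)))) := by
        have hx : (RatFunc.X : RatFunc ℚ) ≠ 0 := RatFunc.X_ne_zero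
        have hdiv : h (k+1) / RatFunc.X = ((k:ℚ)+1) • h (k+1) - (k:ℚ) • h k
            + RatFunc.X * ratDeriv (h k)
            - (1/4 : ℚ) • (RatFunc.X * ratDeriv (RatFunc.X * ratDeriv (RatFunc.X * h k))) := by
          simp only [RatFunc.smul_eq_C_mul] at hrecn ⊢
          push_cast at hrecn ⊢
          simp only [map_sub, map_add, map_one, map_natCast] at hrecn ⊢
          linear_combination hrecn
        rw [← hdiv, mul_div_cancel₀ _ hx]
      -- the Laurent-series equation
      have hLeq : (h (k+1) : LS) = HahnSeries.single (1:ℤ) (1:ℚ)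
          * (((k:ℚ)+1) • (h (k+1) : LS) + ((ψ : PS) : LS)) := by
        conv_lhs => rw [heq]
        rw [map_mul, RatFunc.coe_X]
        congr 1
        rw [map_sub, map_add, map_sub, ratFunc_coe_smul,
          ratFunc_coe_smul, ratFunc_coe_smul, map_mul, map_mul,
          RatFunc.coe_X, d1, d3, hφL]
        rw [hψ, map_sub (HahnSeries.ofPowerSeries ℤ ℚ), map_add (HahnSeries.ofPowerSeries ℤ ℚ),
          PowerSeries.coe_smul, PowerSeries.coe_smul,
          map_mul (HahnSeries.ofPowerSeries ℤ ℚ), map_mul (HahnSeries.ofPowerSeries ℤ ℚ),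
          HahnSeries.ofPowerSeries_X]
        simp only [← HahnSeries.C_mul_eq_smul, map_neg]
        ring
      -- the power series χ
      set c : ℕ → ℚ := fun i =>
        Nat.rec 0 (fun j cj => ((k:ℚ)+1) * cj + PowerSeries.coeff j ψ) i with hc
      have hc0 : c 0 = 0 := rfl
      have hcsucc : ∀ j : ℕ, c (j+1) = ((k:ℚ)+1) * c j + PowerSeries.coeff j ψ :=
        fun j => rfl
      set χ : PS := PowerSeries.mk c with hχdef
      have hχ : χ = PowerSeries.X * (((k:ℚ)+1) • χ + ψ) := by
        ext i
        cases i with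
        | zero =>
          rw [PowerSeries.coeff_zero_X_mul, hχdef, PowerSeries.coeff_mk, hc0]
        | succ j =>
          rw [PowerSeries.coeff_succ_X_mul, hχdef, PowerSeries.coeff_mk, hcsucc j, map_add,
            PowerSeries.coeff_smul, PowerSeries.coeff_mk, smul_eq_mul]
      have hχL : ((χ : PS) : LS) = HahnSeries.single (1:ℤ) (1:ℚ)
          * (((k:ℚ)+1) • ((χ : PS) : LS) + ((ψ : PS) : LS)) := by
        conv_lhs => rw [hχ]
        rw [map_mul (HahnSeries.ofPowerSeries ℤ ℚ), map_add (HahnSeries.ofPowerSeries ℤ ℚ),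
          PowerSeries.coe_smul, HahnSeries.ofPowerSeries_X]
      -- uniqueness
      have huniq : (h (k+1) : LS) = ((χ : PS) : LS) := by
        set y : LS := (h (k+1) : LS) - ((χ : PS) : LS) with hy
        have hsub : y = HahnSeries.single (1:ℤ) ((k:ℚ)+1) * y := by
          rw [hy]
          conv_lhs => rw [hLeq, hχL]
          have hsingle : HahnSeries.single (1:ℤ) ((k:ℚ)+1)
              = ((k:ℚ)+1) • HahnSeries.single (1:ℤ) (1:ℚ) := by
            ext a
            simp [HahnSeries.coeff_smul, HahnSeries.coeff_single, mul_ite]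
            split_ifs <;> ring
          rw [hsingle]
          simp only [← HahnSeries.C_mul_eq_smul]
          ring
        have hfac : (1 - HahnSeries.single (1:ℤ) ((k:ℚ)+1)) * y = 0 := by
          rw [sub_mul, one_mul, ← hsub, sub_self]
        have hne : (1 - HahnSeries.single (1:ℤ) ((k:ℚ)+1)) ≠ 0 := by
          intro hcontra
          have := congrArg (fun z : LS => z.coeff 0) hcontra
          simp only [HahnSeries.coeff_sub, HahnSeries.coeff_one,
            HahnSeries.coeff_single_of_ne (by norm_num : (0:ℤ) ≠ 1),
            HahnSeries.coeff_zero] at this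
          norm_num at this
        rcases mul_eq_zero.mp hfac with hcontra | hy0
        · exact absurd hcontra hne
        · rw [hy] at hy0
          exact sub_eq_zero.mp hy0
      refine ⟨χ, huniq, ?_⟩
      -- coefficients of ψ
      have hψc : ∀ i : ℕ, PowerSeries.coeff i ψ
          = ((i:ℚ) - k) * PowerSeries.coeff i φ
            - (1/4) * (i:ℚ)^2 * (if i = 0 then 0 else PowerSeries.coeff (i-1) φ) := by
        intro i
        cases i with
        | zero =>
          simp only [hψ, map_add, map_sub, PowerSeries.coeff_smul, smul_eq_mul,
            PowerSeries.coeff_zero_X_mul, if_pos rfl]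
          push_cast
          ring
        | succ j =>
          simp only [hψ, map_add, map_sub, PowerSeries.coeff_smul, smul_eq_mul,
            PowerSeries.coeff_succ_X_mul, PowerSeries.coeff_derivative,
            Nat.succ_ne_zero, if_false, Nat.add_sub_cancel]
          push_cast
          ring
      -- the coefficient identity for χ
      intro i
      induction i with
      | zero =>
        rw [hχdef, PowerSeries.coeff_mk, hc0, hp0]
        simp [Polynomial.coeff_one]
      | succ j IHj =>
        rw [hχdef, PowerSeries.coeff_mk, hcsucc j]
        rw [hχdef, PowerSeries.coeff_mk] at IHj
        rw [IHj, hψc j, hφc j]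
        have hite : (if j = 0 then (0:ℚ) else PowerSeries.coeff (j-1) φ)
            = if j = 0 then 0 else ((j-1).factorial:ℚ)^2 * (p (j-1)).coeff k := by
          split <;> simp [hφc]
        rw [hite]
        have hps := pstep j k
        cases j with
        | zero =>
          simp only [if_pos rfl, Nat.factorial] at hps ⊢
          push_cast at hps ⊢
          linear_combination -hps
        | succ l =>
          simp only [Nat.succ_ne_zero, if_false, Nat.add_sub_cancel] at hps ⊢
          simp only [Nat.factorial_succ] at hps ⊢
          push_cast at hps ⊢
          linear_combination (-(((l:ℚ)+1) * (l.factorial:ℚ))^2) * hps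
  obtain ⟨φ, hφL, hφc⟩ := main m
  constructor
  · intro i hi
    rw [hφL, PowerSeries.coeff_coe, if_pos hi]
  · intro i
    rw [hφL]
    rw [show ((i:ℤ)) = ((i:ℕ) : ℤ) from rfl, LaurentSeries.coeff_coe_powerSeries]
    exact hφc i
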